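/- Let A₁,…,A_n be r×r Hermitian complex matrices, let k ∈ {1,…,n}, and let v ∈ ℂ^r satisfy (∑_{i≠k} A_i)·v = 0. Then v*·(∑_{1 ≤ i < j ≤ n} (A_iA_j + A_jA_i))·v = −∑_{i≠k} ‖A_i v‖², where ‖·‖ is the standard Euclidean norm on ℂ^r and v* denotes the conjugate transpose of v. -/

import Mathlib

open Matrix

lemma stmt8_sum_mulVec {ι r : Type*} [Fintype r] (s : Finset ι) (M : ι → Matrix r r ℂ)
    (v : r → ℂ) : (∑ i ∈ s, M i) *ᵥ v = ∑ i ∈ s, M i *ᵥ v := by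
  ext j
  simp [Matrix.mulVec, dotProduct, Matrix.sum_apply, Finset.sum_mul]
  rw [Finset.sum_comm]

lemma stmt8_dot_sum {ι r : Type*} [Fintype r] (s : Finset ι) (f : ι → r → ℂ) (x : r → ℂ) :
    x ⬝ᵥ ∑ i ∈ s, f i = ∑ i ∈ s, x ⬝ᵥ f i := by
  simp [dotProduct, Finset.sum_apply, Finset.mul_sum]
  rw [Finset.sum_comm]

lemma stmt8_sum_dot {ι r : Type*} [Fintype r] (s : Finset ι) (f : ι → r → ℂ) (x : r → ℂ) :
    (∑ i ∈ s, f i) ⬝ᵥ x = ∑ i ∈ s, f i ⬝ᵥ x := by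
  simp [dotProduct, Finset.sum_apply, Finset.sum_mul]
  rw [Finset.sum_comm]

lemma stmt8_pairSum {n : ℕ} (c : Fin n → Fin n → ℂ) :
    ∑ ij ∈ Finset.univ.filter (fun ij : Fin n × Fin n => ij.1 < ij.2), (c ij.1 ij.2 + c ij.2 ij.1)
      = (∑ i, ∑ j, c i j) - ∑ i, c i i := by
  have hswap : ∑ ij ∈ Finset.univ.filter (fun ij : Fin n × Fin n => ij.1 < ij.2), c ij.2 ij.1
      = ∑ ij ∈ Finset.univ.filter (fun ij : Fin n × Fin n => ij.2 < ij.1), c ij.1 ij.2 := by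
    apply Finset.sum_nbij' (fun ij => Prod.swap ij) (fun ij => Prod.swap ij) <;> simp
  have htot : ∑ i, ∑ j, c i j = ∑ ij ∈ (Finset.univ : Finset (Fin n × Fin n)), c ij.1 ij.2 := by
    rw [← Finset.univ_product_univ, Finset.sum_product]
  have hsplit := Finset.sum_filter_add_sum_filter_not (Finset.univ : Finset (Fin n × Fin n))
    (fun ij => ij.1 < ij.2) (fun ij => c ij.1 ij.2)
  have hsplit2 := Finset.sum_filter_add_sum_filter_not
    ((Finset.univ : Finset (Fin n × Fin n)).filter (fun ij => ¬ ij.1 < ij.2))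
    (fun ij => ij.2 < ij.1) (fun ij => c ij.1 ij.2)
  have hgt : ((Finset.univ : Finset (Fin n × Fin n)).filter (fun ij => ¬ ij.1 < ij.2)).filter
      (fun ij => ij.2 < ij.1)
      = (Finset.univ : Finset (Fin n × Fin n)).filter (fun ij => ij.2 < ij.1) := by
    ext ij; simp only [Finset.mem_filter, Finset.mem_univ, true_and]
    exact ⟨fun h => h.2, fun h => ⟨not_lt_of_gt h, h⟩⟩
  have hdiag : ((Finset.univ : Finset (Fin n × Fin n)).filter (fun ij => ¬ ij.1 < ij.2)).filter
      (fun ij => ¬ ij.2 < ij.1)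
      = (Finset.univ : Finset (Fin n × Fin n)).filter (fun ij => ij.1 = ij.2) := by
    ext ij; simp only [Finset.mem_filter, Finset.mem_univ, true_and, not_lt]
    exact ⟨fun h => le_antisymm h.2 h.1, fun h => ⟨le_of_eq h.symm, le_of_eq h⟩⟩
  have hdiag2 : ∑ ij ∈ (Finset.univ : Finset (Fin n × Fin n)).filter (fun ij => ij.1 = ij.2),
      c ij.1 ij.2 = ∑ i, c i i := by
    apply Finset.sum_nbij' (fun ij => ij.1) (fun i => (i, i)) <;> simp +contextual [eq_comm]
  rw [Finset.sum_add_distrib, hswap]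
  rw [hgt, hdiag, hdiag2] at hsplit2
  rw [htot, ← hsplit, ← hsplit2]
  ring

theorem stmt8 (n r : ℕ) (A : Fin n → Matrix (Fin r) (Fin r) ℂ)
    (hA : ∀ i, (A i).IsHermitian) (k : Fin n) (v : Fin r → ℂ)
    (hv : (∑ i ∈ Finset.univ.erase k, A i) *ᵥ v = 0) :
    star v ⬝ᵥ
        ((∑ ij ∈ Finset.univ.filter (fun ij : Fin n × Fin n => ij.1 < ij.2),
            (A ij.1 * A ij.2 + A ij.2 * A ij.1)) *ᵥ v)
      = -((∑ i ∈ Finset.univ.erase k, ∑ j : Fin r, ‖(A i *ᵥ v) j‖ ^ 2 : ℝ) : ℂ) := by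
  set w : Fin n → Fin r → ℂ := fun i => A i *ᵥ v with hw
  have hherm : ∀ i (y : Fin r → ℂ), star v ⬝ᵥ (A i *ᵥ y) = star (w i) ⬝ᵥ y := by
    intro i y
    rw [Matrix.dotProduct_mulVec, hw]
    congr 1
    rw [Matrix.star_mulVec, (hA i).eq]
  have hsum : ∑ i, w i = w k := by
    rw [← Finset.add_sum_erase _ _ (Finset.mem_univ k)]
    have h0 : ∑ i ∈ Finset.univ.erase k, w i = 0 := by
      rw [hw, ← stmt8_sum_mulVec]; exact hv
    rw [h0, add_zero]
  have hLHS : star v ⬝ᵥ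
        ((∑ ij ∈ Finset.univ.filter (fun ij : Fin n × Fin n => ij.1 < ij.2),
            (A ij.1 * A ij.2 + A ij.2 * A ij.1)) *ᵥ v)
      = ∑ ij ∈ Finset.univ.filter (fun ij : Fin n × Fin n => ij.1 < ij.2),
          (star (w ij.1) ⬝ᵥ w ij.2 + star (w ij.2) ⬝ᵥ w ij.1) := by
    rw [stmt8_sum_mulVec, stmt8_dot_sum]
    apply Finset.sum_congr rfl
    intro ij _
    rw [Matrix.add_mulVec, dotProduct_add, ← Matrix.mulVec_mulVec, ← Matrix.mulVec_mulVec,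
      hherm, hherm]
  rw [hLHS, stmt8_pairSum (fun i j => star (w i) ⬝ᵥ w j)]
  have h1 : ∑ i, ∑ j, star (w i) ⬝ᵥ w j = star (w k) ⬝ᵥ w k := by
    have h : ∑ i, ∑ j, star (w i) ⬝ᵥ w j = star (∑ i, w i) ⬝ᵥ (∑ j, w j) := by
      rw [star_sum, stmt8_sum_dot]
      exact Finset.sum_congr rfl fun i _ => (stmt8_dot_sum _ _ _).symm
    rw [h, hsum]
  have hdiag : ∀ i, star (w i) ⬝ᵥ w i = ((∑ j : Fin r, ‖w i j‖ ^ 2 : ℝ) : ℂ) := by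
    intro i
    rw [dotProduct, Complex.ofReal_sum]
    apply Finset.sum_congr rfl
    intro j _
    rw [Pi.star_apply]
    rw [show (star (w i j) : ℂ) = (starRingEnd ℂ) (w i j) from rfl]
    rw [mul_comm, Complex.mul_conj, Complex.normSq_eq_norm_sq]
  rw [h1]
  have h2 : ∑ i, star (w i) ⬝ᵥ w i
      = star (w k) ⬝ᵥ w k + ∑ i ∈ Finset.univ.erase k, star (w i) ⬝ᵥ w i :=
    (Finset.add_sum_erase _ _ (Finset.mem_univ k)).symm
  rw [h2, Finset.sum_congr rfl fun i _ => hdiag i]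
  push_cast
  ring
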